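/- Let S and A be finite nonempty types, let n and T be natural numbers with T ≥ 1, and let θ ∈ ℝⁿ. Let μ : S → ℝ be an initial distribution (nonnegative, summing to 1), let p : S → A → S → ℝ be a transition kernel (p(s, a, ·) nonnegative and summing to 1 for every s, a), and let π : ℝⁿ → S → A → ℝ be a policy such that for each (s, a) the map θ' ↦ π(θ', s, a) is differentiable at θ, π(θ', s, a) > 0 and Σ_{a} π(θ', s, a) = 1 for all s and all θ' in a neighborhood of θ. For a trajectory τ = (s₀, a₀, …, s_{T−1}, a_{T−1}, s_T) ∈ (S × A)^T × S define P(θ', τ) := μ(s₀) · ∏_{t=0}^{T−1} π(θ', s_t, a_t) · p(s_t, a_t, s_{t+1}), and for a reward function r : S → A → ℝ and discount γ ∈ ℝ define the return R(τ) := Σ_{t=0}^{T−1} γ^t · r(s_t, a_t). Define J(θ') := Σ_τ P(θ', τ) · R(τ). Then J is differentiable at θ and ∇_θ J(θ) = Σ_τ P(θ, τ) · R(τ) · ( Σ_{t=0}^{T−1} ∇_θ log π(θ, s_t, a_t) ). -/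

import Mathlib

/-- Policy Gradient Theorem for a finite episodic MDP with horizon `T ≥ 1`:
for trajectories `τ = ((s₀,a₀),…,(s_{T-1},a_{T-1}), s_T)` with probability
`P θ' τ = μ s₀ * ∏ t, π θ' (s_t) (a_t) * p (s_t) (a_t) (s_{t+1})` and return
`R τ = ∑ t, γ^t * r (s_t) (a_t)`, the objective `J θ' = ∑ τ, P θ' τ * R τ` is
differentiable at `θ` and its gradient is the expectation of the return weighted
by the sum of the per-step policy scores. -/
theorem policy_gradient_theorem_finite_mdp
    {S A : Type*} [Fintype S] [Nonempty S] [Fintype A] [Nonempty A]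
    {n T : ℕ} (hT : 1 ≤ T) (θ : Fin n → ℝ)
    (μ : S → ℝ) (hμ_nonneg : ∀ s : S, 0 ≤ μ s) (hμ_sum : ∑ s : S, μ s = 1)
    (p : S → A → S → ℝ)
    (hp_nonneg : ∀ s a s', 0 ≤ p s a s') (hp_sum : ∀ s a, ∑ s' : S, p s a s' = 1)
    (π : (Fin n → ℝ) → S → A → ℝ)
    (hπ_diff : ∀ (s : S) (a : A), DifferentiableAt ℝ (fun θ' => π θ' s a) θ)
    (hπ_pos : ∀ᶠ θ' in nhds θ, ∀ (s : S) (a : A), 0 < π θ' s a)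
    (hπ_sum : ∀ᶠ θ' in nhds θ, ∀ s : S, ∑ a : A, π θ' s a = 1)
    (r : S → A → ℝ) (γ : ℝ)
    -- the next state after step `t` : the state of step `t+1`, or the final state
    (nxt : ((Fin T → S × A) × S) → Fin T → S)
    (hnxt : ∀ (τ : (Fin T → S × A) × S) (t : Fin T),
      nxt τ t = if h : (t : ℕ) + 1 < T then (τ.1 ⟨(t : ℕ) + 1, h⟩).1 else τ.2)
    (P : (Fin n → ℝ) → ((Fin T → S × A) × S) → ℝ)
    (hP : ∀ θ' (τ : (Fin T → S × A) × S),
      P θ' τ = μ (τ.1 ⟨0, hT⟩).1 *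
        ∏ t : Fin T, (π θ' (τ.1 t).1 (τ.1 t).2 * p (τ.1 t).1 (τ.1 t).2 (nxt τ t)))
    (R : ((Fin T → S × A) × S) → ℝ)
    (hR : ∀ τ : (Fin T → S × A) × S,
      R τ = ∑ t : Fin T, γ ^ (t : ℕ) * r (τ.1 t).1 (τ.1 t).2)
    (J : (Fin n → ℝ) → ℝ)
    (hJ : ∀ θ', J θ' = ∑ τ : (Fin T → S × A) × S, P θ' τ * R τ) :
    DifferentiableAt ℝ J θ ∧
      fderiv ℝ J θ =
        ∑ τ : (Fin T → S × A) × S, (P θ τ * R τ) •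
          ∑ t : Fin T,
            fderiv ℝ (fun θ' => Real.log (π θ' (τ.1 t).1 (τ.1 t).2)) θ := by
  have hπpos : ∀ (s : S) (a : A), 0 < π θ s a := hπ_pos.self_of_nhds
  have hlog : ∀ (s : S) (a : A),
      fderiv ℝ (fun θ' => Real.log (π θ' s a)) θ
        = (π θ s a)⁻¹ • fderiv ℝ (fun θ' => π θ' s a) θ := fun s a =>
    ((hπ_diff s a).hasFDerivAt.log (hπpos s a).ne').fderiv
  have hP' : ∀ τ : (Fin T → S × A) × S,
      HasFDerivAt (fun θ' => P θ' τ * R τ)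
        ((P θ τ * R τ) • ∑ t : Fin T,
          fderiv ℝ (fun θ' => Real.log (π θ' (τ.1 t).1 (τ.1 t).2)) θ) θ := by
    intro τ
    have hprod : HasFDerivAt
        (fun θ' => ∏ t : Fin T,
          (π θ' (τ.1 t).1 (τ.1 t).2 * p (τ.1 t).1 (τ.1 t).2 (nxt τ t)))
        (∑ t : Fin T, (∏ j ∈ Finset.univ.erase t,
            (π θ (τ.1 j).1 (τ.1 j).2 * p (τ.1 j).1 (τ.1 j).2 (nxt τ j))) •
          (p (τ.1 t).1 (τ.1 t).2 (nxt τ t) •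
            fderiv ℝ (fun θ' => π θ' (τ.1 t).1 (τ.1 t).2) θ)) θ := by
      apply HasFDerivAt.finset_prod
      intro t _
      exact ((hπ_diff _ _).hasFDerivAt.mul_const _)
    have h1 := (hprod.const_mul (μ (τ.1 ⟨0, hT⟩).1)).mul_const (R τ)
    have heq : (fun θ' => P θ' τ * R τ)
        = fun θ' => (μ (τ.1 ⟨0, hT⟩).1 * ∏ t : Fin T,
          (π θ' (τ.1 t).1 (τ.1 t).2 * p (τ.1 t).1 (τ.1 t).2 (nxt τ t))) * R τ := by
      funext θ'; rw [hP]
    rw [heq]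
    refine h1.congr_fderiv (Eq.symm ?_)
    rw [Finset.smul_sum, Finset.smul_sum, Finset.smul_sum]
    refine Finset.sum_congr rfl fun t _ => ?_
    rw [hlog, smul_smul, smul_smul, smul_smul, smul_smul, hP]
    congr 1
    have hπt : π θ (τ.1 t).1 (τ.1 t).2 ≠ 0 := (hπpos _ _).ne'
    rw [← Finset.mul_prod_erase _ _ (Finset.mem_univ t)]
    field_simp
  have hsum : HasFDerivAt (fun θ' => ∑ τ : (Fin T → S × A) × S, P θ' τ * R τ)
      (∑ τ : (Fin T → S × A) × S, (P θ τ * R τ) •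
        ∑ t : Fin T,
          fderiv ℝ (fun θ' => Real.log (π θ' (τ.1 t).1 (τ.1 t).2)) θ) θ :=
    HasFDerivAt.fun_sum fun τ _ => hP' τ
  have hfun : J = fun θ' => ∑ τ : (Fin T → S × A) × S, P θ' τ * R τ := funext hJ
  rw [hfun]
  exact ⟨hsum.differentiableAt, hsum.fderiv⟩
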